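/- Let X and Y be Banach spaces, x ∈ X \ {0}, y ∈ Y \ {0} with ‖x‖ + ‖y‖ = 1. Then (x, y) is a semi SCS point of B_{X ⊕_1 Y} if and only if x/‖x‖ is a semi SCS point of B_X and y/‖y‖ is a semi SCS point of B_Y. -/

import Mathlib

/-- A point `x₀` of the closed unit ball of `Z` is a *semi SCS point* of `B_Z` if for every
`ε > 0` there exist finitely many slices `Sᵢ = {z ∈ B_Z : fᵢ z > ‖fᵢ‖ - δᵢ}` of `B_Z` and convex
weights `λᵢ ≥ 0`, `Σ λᵢ = 1`, such that the convex combination `Σ λᵢ Sᵢ` is contained in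
`B(x₀, ε)`. -/
def IsSemiSCSPointOfBall {Z : Type*} [NormedAddCommGroup Z] [NormedSpace ℝ Z] (x : Z) : Prop :=
  ‖x‖ ≤ 1 ∧ ∀ ε > (0 : ℝ), ∃ (n : ℕ) (lam : Fin n → ℝ) (f : Fin n → (Z →L[ℝ] ℝ))
    (δ : Fin n → ℝ), (∀ i, 0 ≤ lam i) ∧ (∑ i, lam i) = 1 ∧ (∀ i, 0 < δ i) ∧
    ∀ z : Fin n → Z, (∀ i, ‖z i‖ ≤ 1 ∧ f i (z i) > ‖f i‖ - δ i) →
      (∑ i, lam i • z i) ∈ Metric.closedBall x ε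

set_option linter.unusedSectionVars false
set_option linter.unnecessarySimpa false

section helpers
variable {Z : Type*} [NormedAddCommGroup Z] [NormedSpace ℝ Z]

lemma exists_slice_point (F : Z →L[ℝ] ℝ) {σ : ℝ} (hσ : 0 < σ) :
    ∃ z : Z, ‖z‖ ≤ 1 ∧ F z > ‖F‖ - σ := by
  by_contra h
  push_neg at h
  have h0 : 0 ≤ ‖F‖ - σ := by simpa using h 0 (by simp)
  have hb : ‖F‖ ≤ ‖F‖ - σ := by
    refine F.opNorm_le_bound h0 fun z => ?_
    rcases eq_or_ne z 0 with rfl | hz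
    · simpa using mul_nonneg h0 (norm_nonneg (0 : Z))
    · have hzn : 0 < ‖z‖ := norm_pos_iff.mpr hz
      have hz1 : ‖(‖z‖⁻¹ • z)‖ ≤ 1 := by
        rw [norm_smul, norm_inv, norm_norm, inv_mul_cancel₀ hzn.ne']
      have h1 := h _ hz1
      have h2 := h _ (by rwa [norm_neg] : ‖-(‖z‖⁻¹ • z)‖ ≤ 1)
      rw [map_smul] at h1
      rw [map_neg, map_smul] at h2
      have h1' : ‖z‖⁻¹ * F z ≤ ‖F‖ - σ := by simpa [smul_eq_mul] using h1
      have h2' : -(‖z‖⁻¹ * F z) ≤ ‖F‖ - σ := by simpa [smul_eq_mul] using h2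
      have habs : |‖z‖⁻¹ * F z| ≤ ‖F‖ - σ := abs_le.mpr ⟨by linarith, h1'⟩
      rw [Real.norm_eq_abs]
      calc |F z| = (|‖z‖⁻¹ * F z|) * ‖z‖ := by
            rw [abs_mul, abs_inv, abs_norm]; field_simp
        _ ≤ (‖F‖ - σ) * ‖z‖ := mul_le_mul_of_nonneg_right habs (norm_nonneg z)
  linarith

lemma norm_normalize {f : Z →L[ℝ] ℝ} (hf : f ≠ 0) : ‖(‖f‖⁻¹ • f)‖ = 1 := by
  rw [norm_smul (‖f‖⁻¹) f, norm_inv, norm_norm, inv_mul_cancel₀ (norm_pos_iff.mpr hf).ne']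

/-- Refined data: functionals can be taken norm-one and `δ i ≤ ε`. -/
lemma semiSCS_refined {x : Z} (h : IsSemiSCSPointOfBall x)
    (f₀ : Z →L[ℝ] ℝ) (hf₀ : ‖f₀‖ = 1) {ε : ℝ} (hε : 0 < ε) :
    ∃ (n : ℕ) (lam : Fin n → ℝ) (f : Fin n → (Z →L[ℝ] ℝ)) (δ : Fin n → ℝ),
      (∀ i, 0 ≤ lam i) ∧ (∑ i, lam i) = 1 ∧ (∀ i, 0 < δ i) ∧
      (∀ i, ‖f i‖ = 1) ∧ (∀ i, δ i ≤ ε) ∧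
      ∀ z : Fin n → Z, (∀ i, ‖z i‖ ≤ 1 ∧ f i (z i) > ‖f i‖ - δ i) →
        (∑ i, lam i • z i) ∈ Metric.closedBall x ε := by
  classical
  obtain ⟨n, lam, f, δ, hlam, hsum, hδ, hball⟩ := h.2 ε hε
  refine ⟨n, lam, fun i => if f i = 0 then f₀ else ‖f i‖⁻¹ • f i,
    fun i => if f i = 0 then ε else min (δ i / ‖f i‖) ε, hlam, hsum, ?_, ?_, ?_, ?_⟩
  · intro i
    by_cases hfi : f i = 0
    · simp [hfi, hε]
    · simp only [if_neg hfi]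
      exact lt_min (div_pos (hδ i) (norm_pos_iff.mpr hfi)) hε
  · intro i
    by_cases hfi : f i = 0
    · simp [hfi, hf₀]
    · simp only [if_neg hfi]; exact norm_normalize hfi
  · intro i
    by_cases hfi : f i = 0
    · simp [hfi]
    · simp only [if_neg hfi]; exact min_le_right _ _
  · intro z hz
    refine hball z fun i => ?_
    obtain ⟨hz1, hz2⟩ := hz i
    refine ⟨hz1, ?_⟩
    by_cases hfi : f i = 0
    · rw [hfi]; simpa using hδ i
    · simp only [if_neg hfi, norm_normalize hfi] at hz2
      have hfn : (0:ℝ) < ‖f i‖ := norm_pos_iff.mpr hfi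
      have h2 : ‖f i‖⁻¹ * f i (z i) > 1 - δ i / ‖f i‖ := by
        have hmin : min (δ i / ‖f i‖) ε ≤ δ i / ‖f i‖ := min_le_left _ _
        have he : (‖f i‖⁻¹ • f i) (z i) = ‖f i‖⁻¹ * f i (z i) := by
          simp [smul_eq_mul]
        rw [he] at hz2
        linarith
      have k1 : ‖f i‖ * (‖f i‖⁻¹ * f i (z i)) = f i (z i) := by
        field_simp
      have k2 : ‖f i‖ * (1 - δ i / ‖f i‖) = ‖f i‖ - δ i := by
        field_simp
      have := mul_lt_mul_of_pos_left h2 hfn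
      rw [k1, k2] at this
      exact this

/-- Transport along a linear isometry equivalence. -/
lemma IsSemiSCSPointOfBall.map {W : Type*} [NormedAddCommGroup W] [NormedSpace ℝ W]
    (T : Z ≃ₗᵢ[ℝ] W) {x : Z} (h : IsSemiSCSPointOfBall x) :
    IsSemiSCSPointOfBall (T x) := by
  obtain ⟨hx, h⟩ := h
  refine ⟨by rwa [T.norm_map], fun ε hε => ?_⟩
  obtain ⟨n, lam, f, δ, hlam, hsum, hδ, hball⟩ := h ε hε
  refine ⟨n, lam, fun i => (f i).comp (T.symm : W →L[ℝ] Z), δ, hlam, hsum, hδ, fun z hz => ?_⟩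
  have key : ∀ i, ‖(f i).comp (T.symm : W →L[ℝ] Z)‖ = ‖f i‖ := fun i =>
    (f i).opNorm_comp_linearIsometryEquiv T.symm
  have hz' : ∀ i, ‖T.symm (z i)‖ ≤ 1 ∧ f i (T.symm (z i)) > ‖f i‖ - δ i := by
    intro i
    obtain ⟨h1, h2⟩ := hz i
    rw [key i] at h2
    exact ⟨by rwa [T.symm.norm_map], h2⟩
  have := hball (fun i => T.symm (z i)) hz'
  rw [Metric.mem_closedBall, dist_eq_norm] at this ⊢
  calc ‖∑ i, lam i • z i - T x‖ = ‖T (∑ i, lam i • (T.symm (z i)) - x)‖ := by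
        rw [map_sub, map_sum]
        simp only [map_smul, T.apply_symm_apply]
    _ = ‖∑ i, lam i • (T.symm (z i)) - x‖ := T.norm_map _
    _ ≤ ε := this

end helpers
section prod
variable {X Y : Type*} [NormedAddCommGroup X] [NormedSpace ℝ X]
  [NormedAddCommGroup Y] [NormedSpace ℝ Y]

noncomputable def projX : WithLp 1 (X × Y) →L[ℝ] X :=
  (ContinuousLinearMap.fst ℝ X Y).comp
    (WithLp.prodContinuousLinearEquiv 1 ℝ X Y : WithLp 1 (X × Y) →L[ℝ] X × Y)

noncomputable def projY : WithLp 1 (X × Y) →L[ℝ] Y :=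
  (ContinuousLinearMap.snd ℝ X Y).comp
    (WithLp.prodContinuousLinearEquiv 1 ℝ X Y : WithLp 1 (X × Y) →L[ℝ] X × Y)

noncomputable def inX : X →L[ℝ] WithLp 1 (X × Y) :=
  ((WithLp.prodContinuousLinearEquiv 1 ℝ X Y).symm : X × Y →L[ℝ] WithLp 1 (X × Y)).comp
    (ContinuousLinearMap.inl ℝ X Y)

noncomputable def inY : Y →L[ℝ] WithLp 1 (X × Y) :=
  ((WithLp.prodContinuousLinearEquiv 1 ℝ X Y).symm : X × Y →L[ℝ] WithLp 1 (X × Y)).comp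
    (ContinuousLinearMap.inr ℝ X Y)

@[simp] lemma projX_symm_apply (u : X) (v : Y) :
    projX ((WithLp.equiv 1 (X × Y)).symm (u, v)) = u := by
  simp [projX]

@[simp] lemma projY_symm_apply (u : X) (v : Y) :
    projY ((WithLp.equiv 1 (X × Y)).symm (u, v)) = v := by
  simp [projY]

@[simp] lemma inX_apply (u : X) : inX u = (WithLp.equiv 1 (X × Y)).symm (u, 0) := by
  simp [inX]

@[simp] lemma inY_apply (v : Y) : inY v = (WithLp.equiv 1 (X × Y)).symm (0, v) := by
  simp [inY]

lemma l1_norm (z : WithLp 1 (X × Y)) : ‖z‖ = ‖projX z‖ + ‖projY z‖ := by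
  rw [WithLp.prod_norm_eq_add (by norm_num)]
  norm_num
  rfl

lemma z_decomp (z : WithLp 1 (X × Y)) : z = inX (projX z) + inY (projY z) := by
  apply (WithLp.prodContinuousLinearEquiv 1 ℝ X Y).injective
  rw [map_add]
  simp [projX, projY, inX, inY]
  ext <;> simp

end prod

section more
variable {X Y : Type*} [NormedAddCommGroup X] [NormedSpace ℝ X]
  [NormedAddCommGroup Y] [NormedSpace ℝ Y]

lemma norm_projX_le (z : WithLp 1 (X × Y)) : ‖projX z‖ ≤ ‖z‖ := by
  rw [l1_norm z]; exact le_add_of_nonneg_right (norm_nonneg _)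

lemma norm_projY_le (z : WithLp 1 (X × Y)) : ‖projY z‖ ≤ ‖z‖ := by
  rw [l1_norm z]; exact le_add_of_nonneg_left (norm_nonneg _)

lemma norm_inX (u : X) : ‖(inX u : WithLp 1 (X × Y))‖ = ‖u‖ := by
  rw [inX_apply]; exact WithLp.norm_toLp_fst 1 X Y u

lemma norm_inY (v : Y) : ‖(inY v : WithLp 1 (X × Y))‖ = ‖v‖ := by
  rw [inY_apply]; exact WithLp.norm_toLp_snd 1 X Y v

lemma norm_comp_projX (f : X →L[ℝ] ℝ) : ‖f.comp (projX (X := X) (Y := Y))‖ = ‖f‖ := by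
  set F := f.comp (projX (X := X) (Y := Y)) with hF
  refine le_antisymm (F.opNorm_le_bound (norm_nonneg f) fun z => ?_)
    (f.opNorm_le_bound (norm_nonneg F) fun u => ?_)
  · calc ‖F z‖ = ‖f (projX z)‖ := rfl
      _ ≤ ‖f‖ * ‖projX z‖ := f.le_opNorm _
      _ ≤ ‖f‖ * ‖z‖ := mul_le_mul_of_nonneg_left (norm_projX_le z) (norm_nonneg f)
  · calc ‖f u‖ = ‖F (inX u : WithLp 1 (X × Y))‖ := by rw [hF, ContinuousLinearMap.comp_apply, inX_apply, projX_symm_apply]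
      _ ≤ ‖F‖ * ‖(inX u : WithLp 1 (X × Y))‖ := F.le_opNorm _
      _ = ‖F‖ * ‖u‖ := by rw [norm_inX]

lemma norm_comp_projY (g : Y →L[ℝ] ℝ) : ‖g.comp (projY (X := X) (Y := Y))‖ = ‖g‖ := by
  set G := g.comp (projY (X := X) (Y := Y)) with hG
  refine le_antisymm (G.opNorm_le_bound (norm_nonneg g) fun z => ?_)
    (g.opNorm_le_bound (norm_nonneg G) fun v => ?_)
  · calc ‖G z‖ = ‖g (projY z)‖ := rfl
      _ ≤ ‖g‖ * ‖projY z‖ := g.le_opNorm _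
      _ ≤ ‖g‖ * ‖z‖ := mul_le_mul_of_nonneg_left (norm_projY_le z) (norm_nonneg g)
  · calc ‖g v‖ = ‖G (inY v : WithLp 1 (X × Y))‖ := by rw [hG, ContinuousLinearMap.comp_apply, inY_apply, projY_symm_apply]
      _ ≤ ‖G‖ * ‖(inY v : WithLp 1 (X × Y))‖ := G.le_opNorm _
      _ = ‖G‖ * ‖v‖ := by rw [norm_inY]

end more

section main
variable {X Y : Type*} [NormedAddCommGroup X] [NormedSpace ℝ X]
  [NormedAddCommGroup Y] [NormedSpace ℝ Y]

lemma backward_dir (x : X) (y : Y) (hx : x ≠ 0) (hy : y ≠ 0) (hxy : ‖x‖ + ‖y‖ = 1)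
    (hX : IsSemiSCSPointOfBall (‖x‖⁻¹ • x)) (hY : IsSemiSCSPointOfBall (‖y‖⁻¹ • y)) :
    IsSemiSCSPointOfBall ((WithLp.equiv 1 (X × Y)).symm (x, y)) := by
  have ha : (0:ℝ) < ‖x‖ := norm_pos_iff.mpr hx
  have hb : (0:ℝ) < ‖y‖ := norm_pos_iff.mpr hy
  constructor
  · rw [l1_norm]
    simp only [projX_symm_apply, projY_symm_apply]
    exact hxy.le
  intro ε hε
  obtain ⟨fx, hfx, -⟩ := exists_dual_vector ℝ x (norm_ne_zero_iff.mpr hx)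
  obtain ⟨fy, hfy, -⟩ := exists_dual_vector ℝ y (norm_ne_zero_iff.mpr hy)
  have hε2 : (0:ℝ) < ε/2 := by linarith
  obtain ⟨n, lam, f, δ, hlam, hlsum, hδ, hfn, hδε, hballX⟩ := semiSCS_refined hX fx hfx hε2
  obtain ⟨m, mu, g, η, hmu, hmsum, hη, hgn, hηε, hballY⟩ := semiSCS_refined hY fy hfy hε2
  refine ⟨n + m, Fin.append (fun i => ‖x‖ * lam i) (fun j => ‖y‖ * mu j),
    Fin.append (fun i => (f i).comp projX) (fun j => (g j).comp projY),
    Fin.append δ η, ?_, ?_, ?_, ?_⟩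
  · refine Fin.addCases ?_ ?_ <;> intro k <;>
      simp only [Fin.append_left, Fin.append_right]
    · exact mul_nonneg ha.le (hlam k)
    · exact mul_nonneg hb.le (hmu k)
  · rw [Fin.sum_univ_add]
    simp only [Fin.append_left, Fin.append_right, ← Finset.mul_sum, hlsum, hmsum]
    simpa using hxy
  · refine Fin.addCases ?_ ?_ <;> intro k <;>
      simp only [Fin.append_left, Fin.append_right]
    · exact hδ k
    · exact hη k
  · intro z hz
    -- extract component data
    set u : Fin n → X := fun i => projX (z (Fin.castAdd m i)) with hu_def
    set v : Fin n → Y := fun i => projY (z (Fin.castAdd m i)) with hv_def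
    set u' : Fin m → X := fun j => projX (z (Fin.natAdd n j)) with hu'_def
    set v' : Fin m → Y := fun j => projY (z (Fin.natAdd n j)) with hv'_def
    have hleft : ∀ i : Fin n, ‖u i‖ ≤ 1 ∧ f i (u i) > 1 - δ i ∧ ‖v i‖ ≤ δ i := by
      intro i
      obtain ⟨hz1, hz2⟩ := hz (Fin.castAdd m i)
      simp only [Fin.append_left] at hz2
      rw [norm_comp_projX, hfn i] at hz2
      have h1 : ‖u i‖ ≤ 1 := le_trans (norm_projX_le _) hz1
      have h2 : f i (u i) > 1 - δ i := hz2
      have h3 : f i (u i) ≤ ‖u i‖ := by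
        calc f i (u i) ≤ ‖f i (u i)‖ := Real.le_norm_self _
          _ ≤ ‖f i‖ * ‖u i‖ := (f i).le_opNorm _
          _ = ‖u i‖ := by rw [hfn i, one_mul]
      have h4 : ‖u i‖ + ‖v i‖ ≤ 1 := by
        rw [hu_def, hv_def]
        exact (l1_norm (z (Fin.castAdd m i))).symm.le.trans hz1
      exact ⟨h1, h2, by linarith⟩
    have hright : ∀ j : Fin m, ‖v' j‖ ≤ 1 ∧ g j (v' j) > 1 - η j ∧ ‖u' j‖ ≤ η j := by
      intro j
      obtain ⟨hz1, hz2⟩ := hz (Fin.natAdd n j)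
      simp only [Fin.append_right] at hz2
      rw [norm_comp_projY, hgn j] at hz2
      have hz2' : g j (v' j) > 1 - η j := hz2
      have h1 : ‖v' j‖ ≤ 1 := le_trans (norm_projY_le _) hz1
      have h3 : g j (v' j) ≤ ‖v' j‖ := by
        calc g j (v' j) ≤ ‖g j (v' j)‖ := Real.le_norm_self _
          _ ≤ ‖g j‖ * ‖v' j‖ := (g j).le_opNorm _
          _ = ‖v' j‖ := by rw [hgn j, one_mul]
      have h4 : ‖u' j‖ + ‖v' j‖ ≤ 1 := by
        rw [hu'_def, hv'_def]
        exact (l1_norm (z (Fin.natAdd n j))).symm.le.trans hz1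
      exact ⟨h1, hz2', by linarith⟩
    have hA : ‖(∑ i, lam i • u i) - ‖x‖⁻¹ • x‖ ≤ ε/2 := by
      have := hballX u (fun i => ⟨(hleft i).1, by rw [hfn i]; exact (hleft i).2.1⟩)
      rwa [Metric.mem_closedBall, dist_eq_norm] at this
    have hB : ‖(∑ j, mu j • v' j) - ‖y‖⁻¹ • y‖ ≤ ε/2 := by
      have := hballY v' (fun j => ⟨(hright j).1, by rw [hgn j]; exact (hright j).2.1⟩)
      rwa [Metric.mem_closedBall, dist_eq_norm] at this
    rw [Metric.mem_closedBall, dist_eq_norm, l1_norm]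
    rw [map_sub, map_sub, map_sum, map_sum]
    simp only [map_smul, projX_symm_apply, projY_symm_apply]
    rw [Fin.sum_univ_add, Fin.sum_univ_add]
    simp only [Fin.append_left, Fin.append_right]
    have keyX : (∑ i, (‖x‖ * lam i) • projX (z (Fin.castAdd m i)))
        + (∑ j, (‖y‖ * mu j) • projX (z (Fin.natAdd n j))) - x
        = ‖x‖ • ((∑ i, lam i • u i) - ‖x‖⁻¹ • x) + ∑ j, (‖y‖ * mu j) • u' j := by
      rw [smul_sub, Finset.smul_sum, smul_inv_smul₀ ha.ne']
      simp only [smul_smul, hu_def, hu'_def]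
      abel
    have keyY : (∑ i, (‖x‖ * lam i) • projY (z (Fin.castAdd m i)))
        + (∑ j, (‖y‖ * mu j) • projY (z (Fin.natAdd n j))) - y
        = ‖y‖ • ((∑ j, mu j • v' j) - ‖y‖⁻¹ • y) + ∑ i, (‖x‖ * lam i) • v i := by
      rw [smul_sub, Finset.smul_sum, smul_inv_smul₀ hb.ne']
      simp only [smul_smul, hv_def, hv'_def]
      abel
    rw [keyX, keyY]
    have bX : ‖‖x‖ • ((∑ i, lam i • u i) - ‖x‖⁻¹ • x) + ∑ j, (‖y‖ * mu j) • u' j‖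
        ≤ ‖x‖ * (ε/2) + ‖y‖ * (ε/2) := by
      refine le_trans (norm_add_le _ _) (add_le_add ?_ ?_)
      · rw [norm_smul, Real.norm_eq_abs, abs_of_pos ha]
        exact mul_le_mul_of_nonneg_left hA ha.le
      · calc ‖∑ j, (‖y‖ * mu j) • u' j‖ ≤ ∑ j, ‖(‖y‖ * mu j) • u' j‖ :=
              norm_sum_le _ _
          _ ≤ ∑ j, (‖y‖ * mu j) * (ε/2) := by
              refine Finset.sum_le_sum fun j _ => ?_
              rw [norm_smul, Real.norm_eq_abs, abs_of_nonneg (mul_nonneg hb.le (hmu j))]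
              exact mul_le_mul_of_nonneg_left ((hright j).2.2.trans (hηε j))
                (mul_nonneg hb.le (hmu j))
          _ = ‖y‖ * (ε/2) := by
              rw [← Finset.sum_mul, ← Finset.mul_sum, hmsum, mul_one]
    have bY : ‖‖y‖ • ((∑ j, mu j • v' j) - ‖y‖⁻¹ • y) + ∑ i, (‖x‖ * lam i) • v i‖
        ≤ ‖y‖ * (ε/2) + ‖x‖ * (ε/2) := by
      refine le_trans (norm_add_le _ _) (add_le_add ?_ ?_)
      · rw [norm_smul, Real.norm_eq_abs, abs_of_pos hb]
        exact mul_le_mul_of_nonneg_left hB hb.le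
      · calc ‖∑ i, (‖x‖ * lam i) • v i‖ ≤ ∑ i, ‖(‖x‖ * lam i) • v i‖ :=
              norm_sum_le _ _
          _ ≤ ∑ i, (‖x‖ * lam i) * (ε/2) := by
              refine Finset.sum_le_sum fun i _ => ?_
              rw [norm_smul, Real.norm_eq_abs, abs_of_nonneg (mul_nonneg ha.le (hlam i))]
              exact mul_le_mul_of_nonneg_left ((hleft i).2.2.trans (hδε i))
                (mul_nonneg ha.le (hlam i))
          _ = ‖x‖ * (ε/2) := by
              rw [← Finset.sum_mul, ← Finset.mul_sum, hlsum, mul_one]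
    nlinarith [bX, bY]
end main

section forward
variable {X Y : Type*} [NormedAddCommGroup X] [NormedSpace ℝ X]
  [NormedAddCommGroup Y] [NormedSpace ℝ Y]

@[simp] lemma projX_inX (u : X) : projX (inX u : WithLp 1 (X × Y)) = u := by
  rw [inX_apply]; exact projX_symm_apply u 0

@[simp] lemma projX_inY (v : Y) : projX (inY v : WithLp 1 (X × Y)) = 0 := by
  rw [inY_apply]; exact projX_symm_apply 0 v

@[simp] lemma projY_inX (u : X) : projY (inX u : WithLp 1 (X × Y)) = 0 := by
  rw [inX_apply]; exact projY_symm_apply u 0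

@[simp] lemma projY_inY (v : Y) : projY (inY v : WithLp 1 (X × Y)) = v := by
  rw [inY_apply]; exact projY_symm_apply 0 v

set_option maxHeartbeats 2000000 in
lemma forward_dir (x : X) (y : Y) (hx : x ≠ 0) (hy : y ≠ 0) (hxy : ‖x‖ + ‖y‖ = 1)
    (h : IsSemiSCSPointOfBall ((WithLp.equiv 1 (X × Y)).symm (x, y))) :
    IsSemiSCSPointOfBall (‖x‖⁻¹ • x) := by
  have ha : (0:ℝ) < ‖x‖ := norm_pos_iff.mpr hx
  have hb : (0:ℝ) < ‖y‖ := norm_pos_iff.mpr hy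
  constructor
  · rw [norm_smul, Real.norm_eq_abs, abs_of_pos (inv_pos.mpr ha), inv_mul_cancel₀ ha.ne']
  intro ε hε
  set a := ‖x‖ with ha_def
  have hε'' : (0:ℝ) < min (a/2) (ε*a/4) := lt_min (by linarith) (by positivity)
  set ε'' := min (a/2) (ε*a/4) with hε''_def
  have hε''1 : ε'' ≤ a/2 := min_le_left _ _
  have hε''2 : ε'' ≤ ε*a/4 := min_le_right _ _
  obtain ⟨N, lam, F, δ, hlam, hsum, hδ, hball⟩ := h.2 ε'' hε''
  choose zs hzs1 hzs2 using fun k => exists_slice_point (F k) (half_pos (hδ k))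
  set t : Fin N → ℝ := fun k => ‖projX (zs k)‖ with ht_def
  set vstar : Fin N → Y := fun k => projY (zs k) with hv_def
  set fx : Fin N → (X →L[ℝ] ℝ) := fun k => (F k).comp inX with hfx_def
  set γ : Fin N → ℝ := fun k => δ k / 2 with hγ_def
  have hγpos : ∀ k, 0 < γ k := fun k => half_pos (hδ k)
  have ht0 : ∀ k, 0 ≤ t k := fun k => norm_nonneg _
  have ht1 : ∀ k, t k + ‖vstar k‖ ≤ 1 := fun k => (l1_norm (zs k)).symm.le.trans (hzs1 k)
  -- key: admissible X points give admissible Z points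
  have hadm : ∀ (u : Fin N → X), (∀ k, ‖u k‖ ≤ 1 ∧ fx k (u k) > ‖fx k‖ - γ k) →
      ∀ k, ‖(inX (t k • u k) + inY (vstar k) : WithLp 1 (X × Y))‖ ≤ 1 ∧
        F k (inX (t k • u k) + inY (vstar k)) > ‖F k‖ - δ k := by
    intro u hu k
    obtain ⟨hu1, hu2⟩ := hu k
    constructor
    · rw [l1_norm]
      simp only [map_add, projX_inX, projX_inY, projY_inX, projY_inY, add_zero, zero_add]
      calc ‖t k • u k‖ + ‖vstar k‖ ≤ t k * 1 + ‖vstar k‖ := by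
            rw [norm_smul, Real.norm_eq_abs, abs_of_nonneg (ht0 k)]
            exact add_le_add_left (mul_le_mul_of_nonneg_left hu1 (ht0 k)) _
        _ ≤ 1 := by rw [mul_one]; exact ht1 k
    · have hdecomp : zs k = inX (projX (zs k)) + inY (vstar k) := z_decomp (zs k)
      have hw : fx k (projX (zs k)) ≤ ‖fx k‖ * t k := by
        calc fx k (projX (zs k)) ≤ ‖fx k (projX (zs k))‖ := Real.le_norm_self _
          _ ≤ ‖fx k‖ * ‖projX (zs k)‖ := (fx k).le_opNorm _
      have hFz : F k (zs k) = fx k (projX (zs k)) + F k (inY (vstar k)) := by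
        conv_lhs => rw [hdecomp]
        rw [map_add]
        rfl
      have happ : F k (inX (t k • u k) + inY (vstar k))
          = t k * fx k (u k) + F k (inY (vstar k)) := by
        rw [map_add]
        congr 1
        rw [show inX (t k • u k) = t k • (inX (u k) : WithLp 1 (X × Y)) from map_smul _ _ _,
          map_smul]
        rfl
      have step : t k * fx k (u k) ≥ fx k (projX (zs k)) - γ k := by
        have h1 : t k * fx k (u k) ≥ t k * (‖fx k‖ - γ k) :=
          mul_le_mul_of_nonneg_left hu2.le (ht0 k)
        have h2 : t k * γ k ≤ γ k := by
          nlinarith [ht1 k, norm_nonneg (vstar k), hγpos k, ht0 k]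
        nlinarith [hw]
      have := hzs2 k
      rw [hFz] at this
      rw [happ]
      have : fx k (projX (zs k)) + F k (inY (vstar k)) > ‖F k‖ - δ k / 2 := this
      have hγk : γ k = δ k / 2 := rfl
      linarith [step]
  -- membership of the sums
  have hsums : ∀ (u : Fin N → X), (∀ k, ‖u k‖ ≤ 1 ∧ fx k (u k) > ‖fx k‖ - γ k) →
      ‖(∑ k, (lam k * t k) • u k) - x‖ ≤ ε'' ∧ ‖(∑ k, lam k • vstar k) - y‖ ≤ ε'' := by
    intro u hu
    have := hball (fun k => inX (t k • u k) + inY (vstar k)) (hadm u hu)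
    rw [Metric.mem_closedBall, dist_eq_norm] at this
    have hXc : projX ((∑ k, lam k • (inX (t k • u k) + inY (vstar k) : WithLp 1 (X × Y)))
        - (WithLp.equiv 1 (X × Y)).symm (x, y)) = (∑ k, (lam k * t k) • u k) - x := by
      rw [map_sub, map_sum]
      simp only [map_smul, map_add, projX_inX, projX_inY, add_zero, projX_symm_apply]
      congr 1
      exact Finset.sum_congr rfl fun k _ => by rw [smul_smul]
    have hYc : projY ((∑ k, lam k • (inX (t k • u k) + inY (vstar k) : WithLp 1 (X × Y)))
        - (WithLp.equiv 1 (X × Y)).symm (x, y)) = (∑ k, lam k • vstar k) - y := by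
      rw [map_sub, map_sum]
      simp only [map_smul, map_add, projY_inX, projY_inY, smul_zero, zero_add, projY_symm_apply]
    constructor
    · calc ‖(∑ k, (lam k * t k) • u k) - x‖
          = ‖projX ((∑ k, lam k • (inX (t k • u k) + inY (vstar k) : WithLp 1 (X × Y)))
            - (WithLp.equiv 1 (X × Y)).symm (x, y))‖ := by rw [hXc]
        _ ≤ ‖(∑ k, lam k • (inX (t k • u k) + inY (vstar k) : WithLp 1 (X × Y)))
            - (WithLp.equiv 1 (X × Y)).symm (x, y)‖ := norm_projX_le _
        _ ≤ ε'' := this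
    · calc ‖(∑ k, lam k • vstar k) - y‖
          = ‖projY ((∑ k, lam k • (inX (t k • u k) + inY (vstar k) : WithLp 1 (X × Y)))
            - (WithLp.equiv 1 (X × Y)).symm (x, y))‖ := by rw [hYc]
        _ ≤ ‖(∑ k, lam k • (inX (t k • u k) + inY (vstar k) : WithLp 1 (X × Y)))
            - (WithLp.equiv 1 (X × Y)).symm (x, y)‖ := norm_projY_le _
        _ ≤ ε'' := this
  -- the default admissible points
  choose u0 hu01 hu02 using fun k => exists_slice_point (fx k) (hγpos k)
  have hu0 : ∀ k, ‖u0 k‖ ≤ 1 ∧ fx k (u0 k) > ‖fx k‖ - γ k := fun k => ⟨hu01 k, hu02 k⟩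
  obtain ⟨hsum0X, hsum0Y⟩ := hsums u0 hu0
  set T := ∑ k, lam k * t k with hT_def
  have hTle : T ≤ a + ε'' := by
    have h1 : ∑ k, lam k * (t k + ‖vstar k‖) ≤ 1 := by
      calc ∑ k, lam k * (t k + ‖vstar k‖) ≤ ∑ k, lam k * 1 :=
            Finset.sum_le_sum fun k _ => mul_le_mul_of_nonneg_left (ht1 k) (hlam k)
        _ = 1 := by simp only [mul_one]; exact hsum
    have h2 : ‖y‖ - ε'' ≤ ∑ k, lam k * ‖vstar k‖ := by
      have h3 : ‖∑ k, lam k • vstar k‖ ≤ ∑ k, lam k * ‖vstar k‖ := by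
        refine le_trans (norm_sum_le _ _) (Finset.sum_le_sum fun k _ => ?_)
        rw [norm_smul, Real.norm_eq_abs, abs_of_nonneg (hlam k)]
      have h4 : ‖y‖ - ε'' ≤ ‖∑ k, lam k • vstar k‖ := by
        have hrev : ‖y - ∑ k, lam k • vstar k‖ = ‖(∑ k, lam k • vstar k) - y‖ :=
          norm_sub_rev _ _
        linarith [norm_sub_norm_le y (∑ k, lam k • vstar k), hsum0Y, hrev]
      linarith
    have h6 : ∑ k, lam k * (t k + ‖vstar k‖) = T + ∑ k, lam k * ‖vstar k‖ := by
      rw [hT_def, ← Finset.sum_add_distrib]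
      exact Finset.sum_congr rfl fun k _ => by ring
    have : a + ‖y‖ = 1 := hxy
    linarith
  have hTge : a - ε'' ≤ T := by
    have h1 : ‖∑ k, (lam k * t k) • u0 k‖ ≤ T := by
      refine le_trans (norm_sum_le _ _) ?_
      rw [hT_def]
      refine Finset.sum_le_sum fun k _ => ?_
      rw [norm_smul, Real.norm_eq_abs, abs_of_nonneg (mul_nonneg (hlam k) (ht0 k))]
      calc lam k * t k * ‖u0 k‖ ≤ lam k * t k * 1 :=
            mul_le_mul_of_nonneg_left (hu01 k) (mul_nonneg (hlam k) (ht0 k))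
        _ = lam k * t k := mul_one _
    have h2 : a - ε'' ≤ ‖∑ k, (lam k * t k) • u0 k‖ := by
      have := norm_sub_norm_le x (∑ k, (lam k * t k) • u0 k)
      rw [norm_sub_rev] at hsum0X
      linarith
    linarith
  have hTpos : (0:ℝ) < T := by linarith
  refine ⟨N, fun k => lam k * t k / T, fx, γ, fun k => div_nonneg (mul_nonneg (hlam k) (ht0 k)) hTpos.le,
    by rw [← Finset.sum_div, ← hT_def, div_self hTpos.ne'], hγpos, ?_⟩
  intro u hu
  obtain ⟨huX, -⟩ := hsums u hu
  rw [Metric.mem_closedBall, dist_eq_norm]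
  have hsplit : (∑ k, (lam k * t k / T) • u k) - ‖x‖⁻¹ • x
      = T⁻¹ • ((∑ k, (lam k * t k) • u k) - x) + (T⁻¹ - a⁻¹) • x := by
    have e1 : (∑ k, (lam k * t k / T) • u k) = T⁻¹ • (∑ k, (lam k * t k) • u k) := by
      rw [Finset.smul_sum]
      refine Finset.sum_congr rfl fun k _ => ?_
      rw [smul_smul, div_eq_inv_mul]
    rw [e1, smul_sub, sub_smul, ← ha_def]
    abel
  rw [hsplit]
  have b1 : ‖T⁻¹ • ((∑ k, (lam k * t k) • u k) - x)‖ ≤ T⁻¹ * ε'' := by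
    rw [norm_smul, Real.norm_eq_abs, abs_of_pos (inv_pos.mpr hTpos)]
    exact mul_le_mul_of_nonneg_left huX (inv_pos.mpr hTpos).le
  have b2 : ‖(T⁻¹ - a⁻¹) • x‖ ≤ ε'' / T := by
    rw [norm_smul, Real.norm_eq_abs]
    have heq : T⁻¹ - a⁻¹ = (a - T)/(T*a) := by field_simp
    rw [heq, abs_div, abs_of_pos (mul_pos hTpos ha), ← ha_def]
    have habs : |a - T| ≤ ε'' := abs_le.mpr ⟨by linarith, by linarith⟩
    calc |a - T| / (T * a) * a = |a - T| / T := by field_simp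
      _ ≤ ε'' / T := by gcongr
  have key : T⁻¹ * ε'' + ε'' / T ≤ ε := by
    rw [inv_mul_eq_div, ← add_div, div_le_iff₀ hTpos]
    nlinarith
  calc ‖T⁻¹ • ((∑ k, (lam k * t k) • u k) - x) + (T⁻¹ - a⁻¹) • x‖
      ≤ T⁻¹ * ε'' + ε'' / T := le_trans (norm_add_le _ _) (add_le_add b1 b2)
    _ ≤ ε := key
end forward

section swap
variable {X Y : Type*} [NormedAddCommGroup X] [NormedSpace ℝ X]
  [NormedAddCommGroup Y] [NormedSpace ℝ Y]

noncomputable def swapLp : WithLp 1 (X × Y) ≃ₗᵢ[ℝ] WithLp 1 (Y × X) where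
  toLinearEquiv := (WithLp.linearEquiv 1 ℝ (X × Y)).trans
    ((LinearEquiv.prodComm ℝ X Y).trans (WithLp.linearEquiv 1 ℝ (Y × X)).symm)
  norm_map' := fun z => by
    rw [WithLp.prod_norm_eq_add (by norm_num), WithLp.prod_norm_eq_add (by norm_num)]
    norm_num
    exact add_comm _ _

lemma swapLp_apply (x : X) (y : Y) :
    swapLp ((WithLp.equiv 1 (X × Y)).symm (x, y)) = (WithLp.equiv 1 (Y × X)).symm (y, x) := rfl

end swap


/-- For Banach spaces `X`, `Y`, `x ≠ 0`, `y ≠ 0` with `‖x‖ + ‖y‖ = 1`: `(x, y)` is a semi SCS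
point of `B_{X ⊕_1 Y}` iff `x/‖x‖` is a semi SCS point of `B_X` and `y/‖y‖` is a semi SCS
point of `B_Y`. -/
theorem isSemiSCSPointOfBall_prod_one_iff
    {X Y : Type*} [NormedAddCommGroup X] [NormedSpace ℝ X] [CompleteSpace X]
    [NormedAddCommGroup Y] [NormedSpace ℝ Y] [CompleteSpace Y]
    (x : X) (y : Y) (hx : x ≠ 0) (hy : y ≠ 0) (hxy : ‖x‖ + ‖y‖ = 1) :
    IsSemiSCSPointOfBall ((WithLp.equiv 1 (X × Y)).symm (x, y)) ↔
      IsSemiSCSPointOfBall (‖x‖⁻¹ • x) ∧ IsSemiSCSPointOfBall (‖y‖⁻¹ • y) := by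

  constructor
  · intro h
    refine ⟨forward_dir x y hx hy hxy h, ?_⟩
    have h' := h.map swapLp
    rw [swapLp_apply] at h'
    exact forward_dir y x hy hx (by linarith) h'
  · rintro ⟨hX, hY⟩
    exact backward_dir x y hx hy hxy hX hY
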